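/- arXiv:1305.0089 — 3 statements merged into one kernel-verified Lean document; each statement's English description precedes it below -/
import Mathlib

section
/- (Theorem 1, boundary case) Let u : ℝ → ℝ be any function. The recovered gradient values at the endpoints satisfy g_0 = (u(x_1) − u(x_0))/(x_1 − x_0) and g_n = (u(x_n) − u(x_{n−1}))/(x_n − x_{n−1}). -/
open intervalIntegral MeasureTheory Set

private lemma integral_linear (a b p q : ℝ) :
    ∫ t in a..b, (p * t + q) = p * (b^2 - a^2)/2 + q * (b - a) := by
  rw [intervalIntegral.integral_add (Continuous.intervalIntegrable (by fun_prop) _ _)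
    (intervalIntegrable_const), intervalIntegral.integral_const_mul, integral_id,
    intervalIntegral.integral_const]
  simp [smul_eq_mul]; ring

private lemma integral_quad (a b p q r : ℝ) :
    ∫ t in a..b, (p * t^2 + q * t + r) = p * (b^3 - a^3)/3 + q * (b^2 - a^2)/2 + r * (b - a) := by
  rw [intervalIntegral.integral_add (Continuous.intervalIntegrable (by fun_prop) _ _)
      intervalIntegrable_const,
    intervalIntegral.integral_add (Continuous.intervalIntegrable (by fun_prop) _ _)
      (Continuous.intervalIntegrable (by fun_prop) _ _),
    intervalIntegral.integral_const_mul, intervalIntegral.integral_const_mul, integral_id,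
    integral_pow, intervalIntegral.integral_const]
  push_cast
  simp [smul_eq_mul]; ring

private lemma integral_ind (a b c d : ℝ) (had : a ≤ d) (hbc : b ≤ c) (s : Set ℝ)
    (hs : MeasurableSet s) (hset : Ioc a d ∩ s = Ioo b c) (f : ℝ → ℝ) :
    ∫ t in a..d, s.indicator f t = ∫ t in b..c, f t := by
  rw [intervalIntegral.integral_of_le had, MeasureTheory.setIntegral_indicator hs, hset,
    ← MeasureTheory.integral_Ioc_eq_integral_Ioo, ← intervalIntegral.integral_of_le hbc]


/-- The standard hat (piecewise linear nodal) basis function `φ_i` associated with the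
partition `x 0 < x 1 < ... < x n`.  The branch on `[x_{i-1}, x_i]` is omitted when `i = 0`
and the branch on `[x_i, x_{i+1}]` is omitted when `i = n`. -/
noncomputable def hatFn (x : ℕ → ℝ) (n i : ℕ) : ℝ → ℝ := fun t =>
  if 0 < i ∧ x (i-1) ≤ t ∧ t ≤ x i then (t - x (i-1)) / (x i - x (i-1))
  else if i < n ∧ x i ≤ t ∧ t ≤ x (i+1) then (x (i+1) - t) / (x (i+1) - x i)
  else 0

/-- The biorthogonal basis function `λ_i`. -/
noncomputable def biorthFn (x : ℕ → ℝ) (n i : ℕ) : ℝ → ℝ := fun t =>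
  if 0 < i ∧ x (i-1) ≤ t ∧ t < x i then (2*(t - x (i-1)) + (t - x i)) / (x i - x (i-1))
  else if i < n ∧ x i ≤ t ∧ t < x (i+1) then (2*(t - x (i+1)) + (t - x i)) / (x i - x (i+1))
  else 0

/-- The piecewise derivative `u_h'` of the interpolant `u_h = Σ_j u(x_j) φ_j`:
on each open subinterval `(x_j, x_{j+1})` it is the constant
`(u(x_{j+1}) - u(x_j)) / (x_{j+1} - x_j)`, and it is (arbitrarily) `0` at grid points and
outside `[x 0, x n]`. -/
noncomputable def interpDeriv (x : ℕ → ℝ) (n : ℕ) (u : ℝ → ℝ) : ℝ → ℝ := fun t =>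
  ∑ j ∈ Finset.range n,
    if x j < t ∧ t < x (j+1) then (u (x (j+1)) - u (x j)) / (x (j+1) - x j) else 0

/-- The recovered gradient value
`g_i = (∫_α^β u_h' λ_i dx) / (∫_α^β φ_i λ_i dx)` with `α = x 0`, `β = x n`. -/
noncomputable def recGrad (x : ℕ → ℝ) (n : ℕ) (u : ℝ → ℝ) (i : ℕ) : ℝ :=
  (∫ t in (x 0)..(x n), interpDeriv x n u t * biorthFn x n i t) /
  (∫ t in (x 0)..(x n), hatFn x n i t * biorthFn x n i t)

/-- Theorem 1, boundary case: for any `u : ℝ → ℝ`,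
`g_0 = (u(x_1) - u(x_0)) / (x_1 - x_0)` and `g_n = (u(x_n) - u(x_{n-1})) / (x_n - x_{n-1})`. -/
theorem recGrad_boundary (n : ℕ) (x : ℕ → ℝ) (hn : 2 ≤ n)
    (hx : ∀ i < n, x i < x (i+1)) (u : ℝ → ℝ) :
    recGrad x n u 0 = (u (x 1) - u (x 0)) / (x 1 - x 0) ∧
    recGrad x n u n = (u (x n) - u (x (n-1))) / (x n - x (n-1)) := by
  have hn0 : 0 < n := by omega
  have hmx : ∀ i j, i ≤ j → j ≤ n → x i ≤ x j := by
    intro i j hij hjn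
    induction j with
    | zero => simp_all
    | succ k ih =>
      rcases Nat.eq_or_lt_of_le hij with h | h
      · rw [h]
      · exact (ih (by omega) (by omega)).trans (hx k (by omega)).le
  have hdgrid : ∀ k, k ≤ n → interpDeriv x n u (x k) = 0 := by
    intro k hk
    apply Finset.sum_eq_zero
    intro j hj
    rw [if_neg]
    rintro ⟨h1, h2⟩
    rcases Nat.lt_or_ge j k with h | h
    · exact absurd h2 (not_lt.mpr (hmx (j+1) k (by omega) hk))
    · exact absurd h1 (not_lt.mpr (hmx k j h (by simp at hj; omega)))
  constructor
  · -- i = 0 case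
    have h01 : x 0 < x 1 := hx 0 hn0
    have h1n : x 1 ≤ x n := hmx 1 n (by omega) le_rfl
    set c : ℝ := (u (x 1) - u (x 0)) / (x 1 - x 0) with hc
    have hb0 : ∀ t, biorthFn x n 0 t =
        if x 0 ≤ t ∧ t < x 1 then (2*(t - x 1) + (t - x 0)) / (x 0 - x 1) else 0 := by
      intro t; simp [biorthFn, hn0]
    have hh0 : ∀ t, hatFn x n 0 t =
        if x 0 ≤ t ∧ t ≤ x 1 then (x 1 - t) / (x 1 - x 0) else 0 := by
      intro t; simp [hatFn, hn0]
    have hd0 : ∀ t ∈ Ioo (x 0) (x 1), interpDeriv x n u t = c := by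
      intro t ht
      unfold interpDeriv
      rw [Finset.sum_eq_single 0]
      · rw [if_pos ⟨ht.1, ht.2⟩]
      · intro j hj hj0
        rw [if_neg]
        rintro ⟨h1, -⟩
        exact absurd h1 (not_lt.mpr (ht.2.le.trans (hmx 1 j (by omega) (by simp at hj; omega))))
      · intro h; simp at h; omega
    have hnum : (fun t => interpDeriv x n u t * biorthFn x n 0 t) =
        (Ioo (x 0) (x 1)).indicator
          (fun t => c * ((2*(t - x 1) + (t - x 0)) / (x 0 - x 1))) := by
      funext t
      by_cases ht : t ∈ Ioo (x 0) (x 1)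
      · rw [indicator_of_mem ht, hd0 t ht, hb0, if_pos ⟨ht.1.le, ht.2⟩]
      · rw [indicator_of_notMem ht]
        rw [mem_Ioo, not_and_or] at ht
        rcases ht with h | h
        · push_neg at h
          rcases eq_or_lt_of_le h with heq | hlt
          · rw [heq, hdgrid 0 (by omega), zero_mul]
          · rw [hb0, if_neg (by rintro ⟨h1, -⟩; linarith), mul_zero]
        · push_neg at h
          rw [hb0, if_neg (by rintro ⟨-, h2⟩; linarith), mul_zero]
    have hden : (fun t => hatFn x n 0 t * biorthFn x n 0 t) =
        (Ico (x 0) (x 1)).indicator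
          (fun t => ((x 1 - t) / (x 1 - x 0)) * ((2*(t - x 1) + (t - x 0)) / (x 0 - x 1))) := by
      funext t
      by_cases ht : t ∈ Ico (x 0) (x 1)
      · rw [indicator_of_mem ht, hh0, if_pos ⟨ht.1, ht.2.le⟩, hb0, if_pos ⟨ht.1, ht.2⟩]
      · rw [indicator_of_notMem ht, hb0, if_neg, mul_zero]
        rwa [mem_Ico] at ht
    have hset1 : Ioc (x 0) (x n) ∩ Ioo (x 0) (x 1) = Ioo (x 0) (x 1) :=
      inter_eq_right.mpr (fun t ht => ⟨ht.1, ht.2.le.trans h1n⟩)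
    have hset2 : Ioc (x 0) (x n) ∩ Ico (x 0) (x 1) = Ioo (x 0) (x 1) := by
      ext t
      simp only [mem_inter_iff, mem_Ioc, mem_Ico, mem_Ioo]
      constructor
      · rintro ⟨⟨h1, h2⟩, ⟨h3, h4⟩⟩; exact ⟨h1, h4⟩
      · rintro ⟨h1, h2⟩; exact ⟨⟨h1, h2.le.trans h1n⟩, ⟨h1.le, h2⟩⟩
    have hNI : ∫ t in (x 0)..(x n), interpDeriv x n u t * biorthFn x n 0 t
        = c * (x 1 - x 0) / 2 := by
      rw [hnum, integral_ind _ _ _ _ (h01.le.trans h1n) h01.le _ measurableSet_Ioo hset1]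
      have : (fun t => c * ((2*(t - x 1) + (t - x 0)) / (x 0 - x 1)))
          = fun t => (3*c/(x 0 - x 1)) * t + (c * (-2*(x 1) - x 0)/(x 0 - x 1)) := by
        funext t; ring
      rw [this, integral_linear]
      have hne : x 0 - x 1 ≠ 0 := by intro h; nlinarith
      field_simp
      ring
    have hDI : ∫ t in (x 0)..(x n), hatFn x n 0 t * biorthFn x n 0 t
        = (x 1 - x 0) / 2 := by
      rw [hden, integral_ind _ _ _ _ (h01.le.trans h1n) h01.le _ measurableSet_Ico hset2]
      have hne : x 1 - x 0 ≠ 0 := by intro h; nlinarith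
      have hne' : x 0 - x 1 ≠ 0 := by intro h; nlinarith
      have : (fun t => ((x 1 - t) / (x 1 - x 0)) * ((2*(t - x 1) + (t - x 0)) / (x 0 - x 1)))
          = fun t => (-3/((x 1 - x 0)*(x 0 - x 1))) * t^2
              + ((5*(x 1) + x 0)/((x 1 - x 0)*(x 0 - x 1))) * t
              + ((-2*(x 1)^2 - x 0 * x 1)/((x 1 - x 0)*(x 0 - x 1))) := by
        funext t; field_simp; ring
      rw [this, integral_quad]
      field_simp
      ring
    rw [recGrad, hNI, hDI, hc]
    have hne : x 1 - x 0 ≠ 0 := by intro h; nlinarith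
    field_simp
  · -- i = n case
    have hm : n - 1 + 1 = n := by omega
    set m := n - 1 with hmdef
    have hmn : x m < x n := by rw [← hm]; exact hx m (by omega)
    have h0m : x 0 ≤ x m := hmx 0 m (by omega) (by omega)
    set c : ℝ := (u (x n) - u (x m)) / (x n - x m) with hc
    have hbn : ∀ t, biorthFn x n n t =
        if x m ≤ t ∧ t < x n then (2*(t - x m) + (t - x n)) / (x n - x m) else 0 := by
      intro t; simp [biorthFn, hn0, hmdef]
    have hhn : ∀ t, hatFn x n n t =
        if x m ≤ t ∧ t ≤ x n then (t - x m) / (x n - x m) else 0 := by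
      intro t; simp [hatFn, hn0, hmdef]
    have hdn : ∀ t ∈ Ioo (x m) (x n), interpDeriv x n u t = c := by
      intro t ht
      unfold interpDeriv
      rw [Finset.sum_eq_single m]
      · rw [hm, if_pos ⟨ht.1, ht.2⟩]
      · intro j hj hjm
        rw [if_neg]
        rintro ⟨-, h2⟩
        simp only [Finset.mem_range] at hj
        exact absurd h2 (not_lt.mpr ((hmx (j+1) m (by omega) (by omega)).trans ht.1.le))
      · intro h; simp at h; omega
    have hnum : (fun t => interpDeriv x n u t * biorthFn x n n t) =
        (Ioo (x m) (x n)).indicator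
          (fun t => c * ((2*(t - x m) + (t - x n)) / (x n - x m))) := by
      funext t
      by_cases ht : t ∈ Ioo (x m) (x n)
      · rw [indicator_of_mem ht, hdn t ht, hbn, if_pos ⟨ht.1.le, ht.2⟩]
      · rw [indicator_of_notMem ht]
        rw [mem_Ioo, not_and_or] at ht
        rcases ht with h | h
        · push_neg at h
          rcases eq_or_lt_of_le h with heq | hlt
          · rw [heq, hdgrid m (by omega), zero_mul]
          · rw [hbn, if_neg (by rintro ⟨h1, -⟩; linarith), mul_zero]
        · push_neg at h
          rw [hbn, if_neg (by rintro ⟨-, h2⟩; linarith), mul_zero]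
    have hden : (fun t => hatFn x n n t * biorthFn x n n t) =
        (Ioo (x m) (x n)).indicator
          (fun t => ((t - x m) / (x n - x m)) * ((2*(t - x m) + (t - x n)) / (x n - x m))) := by
      funext t
      by_cases ht : t ∈ Ioo (x m) (x n)
      · rw [indicator_of_mem ht, hhn, if_pos ⟨ht.1.le, ht.2.le⟩, hbn, if_pos ⟨ht.1.le, ht.2⟩]
      · rw [indicator_of_notMem ht]
        rw [mem_Ioo, not_and_or] at ht
        rcases ht with h | h
        · push_neg at h
          rcases eq_or_lt_of_le h with heq | hlt
          · rw [heq, hhn, if_pos ⟨le_refl _, hmn.le⟩, sub_self, zero_div, zero_mul]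
          · rw [hbn, if_neg (by rintro ⟨h1, -⟩; linarith), mul_zero]
        · push_neg at h
          rw [hbn, if_neg (by rintro ⟨-, h2⟩; linarith), mul_zero]
    have hset1 : Ioc (x 0) (x n) ∩ Ioo (x m) (x n) = Ioo (x m) (x n) :=
      inter_eq_right.mpr (fun t ht => ⟨lt_of_le_of_lt h0m ht.1, ht.2.le⟩)
    have hNI : ∫ t in (x 0)..(x n), interpDeriv x n u t * biorthFn x n n t
        = c * (x n - x m) / 2 := by
      rw [hnum, integral_ind _ _ _ _ (h0m.trans hmn.le) hmn.le _ measurableSet_Ioo hset1]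
      have : (fun t => c * ((2*(t - x m) + (t - x n)) / (x n - x m)))
          = fun t => (3*c/(x n - x m)) * t + (c * (-2*(x m) - x n)/(x n - x m)) := by
        funext t; ring
      rw [this, integral_linear]
      have hne : x n - x m ≠ 0 := by intro h; nlinarith
      field_simp
      ring
    have hDI : ∫ t in (x 0)..(x n), hatFn x n n t * biorthFn x n n t
        = (x n - x m) / 2 := by
      rw [hden, integral_ind _ _ _ _ (h0m.trans hmn.le) hmn.le _ measurableSet_Ioo hset1]
      have hne : x n - x m ≠ 0 := by intro h; nlinarith
      have : (fun t => ((t - x m) / (x n - x m)) * ((2*(t - x m) + (t - x n)) / (x n - x m)))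
          = fun t => (3/((x n - x m)*(x n - x m))) * t^2
              + ((-5*(x m) - x n)/((x n - x m)*(x n - x m))) * t
              + ((2*(x m)^2 + x m * x n)/((x n - x m)*(x n - x m))) := by
        funext t; field_simp; ring
      rw [this, integral_quad]
      field_simp
      ring
    rw [recGrad, hNI, hDI, hc]
    have hne : x n - x m ≠ 0 := by intro h; nlinarith
    field_simp
end

section
/- (Corollary, uniform grid endpoint error for quadratics) Suppose the partition is uniform with stepsize h > 0 (x_i = x_0 + i h) and x_0 = 0. Let u(x) = a x² + b x + c with a, b, c ∈ ℝ. Then the recovered gradient values at the endpoints satisfy |g_0 − u'(x_0)| = |a| h and |g_n − u'(x_n)| = |a| h. -/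
open intervalIntegral

lemma ae_ne_pt (c : ℝ) : ∀ᵐ t : ℝ, t ≠ c := by
  refine MeasureTheory.ae_iff.2 ?_
  simp

lemma integral_quadratic (A B C p q : ℝ) :
    (∫ t in p..q, (A*t^2 + B*t + C)) = A*(q^3 - p^3)/3 + B*(q^2 - p^2)/2 + C*(q - p) := by
  have h1 : IntervalIntegrable (fun t:ℝ => A*t^2) MeasureTheory.volume p q := by
    apply Continuous.intervalIntegrable; continuity
  have h2 : IntervalIntegrable (fun t:ℝ => B*t) MeasureTheory.volume p q := by
    apply Continuous.intervalIntegrable; continuity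
  have h3 : IntervalIntegrable (fun t:ℝ => C) MeasureTheory.volume p q :=
    intervalIntegrable_const
  rw [intervalIntegral.integral_add (h1.add h2) h3, intervalIntegral.integral_add h1 h2,
    intervalIntegral.integral_const_mul, intervalIntegral.integral_const_mul,
    integral_pow, integral_id, intervalIntegral.integral_const]
  norm_num
  ring

lemma integral_eq_of_ae_indicator {A B lo hi : ℝ} (hAB : A ≤ B) (hA : A ≤ lo) (hlo : lo < hi)
    (hB : hi ≤ B) {f g : ℝ → ℝ}
    (hfg : ∀ᵐ t, t ∈ Set.Ioc A B → f t = Set.indicator (Set.Ioo lo hi) g t) :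
    ∫ t in A..B, f t = ∫ t in lo..hi, g t := by
  rw [intervalIntegral.integral_of_le hAB, intervalIntegral.integral_of_le hlo.le,
    MeasureTheory.setIntegral_congr_ae measurableSet_Ioc hfg,
    MeasureTheory.setIntegral_indicator measurableSet_Ioo,
    show Set.Ioc A B ∩ Set.Ioo lo hi = Set.Ioo lo hi from by
      ext t
      simp only [Set.mem_inter_iff, Set.mem_Ioc, Set.mem_Ioo]
      constructor
      · rintro ⟨_, h2⟩; exact h2
      · rintro ⟨h1, h2⟩; exact ⟨⟨lt_of_le_of_lt hA h1, h2.le.trans hB⟩, h1, h2⟩,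
    MeasureTheory.integral_Ioc_eq_integral_Ioo]

/-- uniform grid endpoint error for quadratics: on a uniform grid with
stepsize `h > 0` and `x_0 = 0` (so `x_i = i h`), for `u(x) = a x² + b x + c` one has
`|g_0 - u'(x_0)| = |a| h` and `|g_n - u'(x_n)| = |a| h`. -/
theorem recGrad_quadratic_endpoint_error_uniform (n : ℕ) (x : ℕ → ℝ) (hn : 2 ≤ n)
    (hx : ∀ i < n, x i < x (i+1)) (h : ℝ) (hpos : 0 < h)
    (hgrid : ∀ i : ℕ, i ≤ n → x i = (i : ℝ) * h) (a b c : ℝ) :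
    |recGrad x n (fun t => a * t^2 + b * t + c) 0 - (2 * a * x 0 + b)| = |a| * h ∧
    |recGrad x n (fun t => a * t^2 + b * t + c) n - (2 * a * x n + b)| = |a| * h := by
  set u : ℝ → ℝ := fun t => a * t^2 + b * t + c with hu
  have hne : h ≠ 0 := ne_of_gt hpos
  have hnn : 0 < n := by omega
  have hx0 : x 0 = 0 := by simpa using hgrid 0 (by omega)
  have hx1 : x 1 = h := by simpa using hgrid 1 (by omega)
  have hxn : x n = (n:ℝ)*h := hgrid n le_rfl
  have hm : ((n-1:ℕ):ℝ) = (n:ℝ) - 1 := by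
    have := Nat.cast_sub (by omega : 1 ≤ n) (R := ℝ); simpa using this
  have hxm : x (n-1) = ((n:ℝ)-1)*h := by rw [hgrid (n-1) (by omega), hm]
  have hmono : ∀ i j : ℕ, i ≤ j → j ≤ n → x i ≤ x j := by
    intro i j hij hj
    rw [hgrid i (hij.trans hj), hgrid j hj]
    exact mul_le_mul_of_nonneg_right (by exact_mod_cast hij) hpos.le
  have hx01 : x 0 < x 1 := by rw [hx0, hx1]; exact hpos
  have hxmn : x (n-1) < x n := by rw [hxm, hxn]; nlinarith
  have hx1n : x 1 ≤ x n := hmono 1 n (by omega) le_rfl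
  have hx0m : x 0 ≤ x (n-1) := hmono 0 (n-1) (by omega) (by omega)
  have hx0n : x 0 ≤ x n := hmono 0 n (by omega) le_rfl
  -- numerator for i = 0
  have Inum0 : (∫ t in (x 0)..(x n), interpDeriv x n u t * biorthFn x n 0 t)
      = (a*h + b)*(h/2) := by
    rw [integral_eq_of_ae_indicator hx0n le_rfl hx01 hx1n
      (g := fun t => (a*h + b) * ((2*(t - x 1) + (t - x 0))/(x 0 - x 1))) ?_]
    · rw [hx0, hx1]
      have inner : ∀ t : ℝ, (2*(t - h) + (t - 0))/(0 - h) = (-3/h)*t + 2 := by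
        intro t
        rw [div_eq_iff (show (0:ℝ) - h ≠ 0 from sub_ne_zero.mpr (Ne.symm hne))]
        field_simp
        ring
      have e1 : ∀ t : ℝ, (a*h + b) * ((2*(t - h) + (t - 0))/(0 - h))
          = 0*t^2 + ((a*h+b)*(-3/h))*t + (a*h+b)*2 := by
        intro t; rw [inner t]; ring
      simp only [e1]
      rw [integral_quadratic]
      field_simp [hne]
      ring
    · filter_upwards [ae_ne_pt (x 1)] with t ht1 htm
      obtain ⟨ht0, htn⟩ := htm
      by_cases hlt : t < x 1
      · rw [Set.indicator_of_mem (Set.mem_Ioo.2 ⟨ht0, hlt⟩)]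
        have hb : biorthFn x n 0 t = (2*(t - x 1) + (t - x 0))/(x 0 - x 1) := by
          unfold biorthFn
          rw [if_neg (by simp), if_pos ⟨hnn, ht0.le, hlt⟩]
        have hd : interpDeriv x n u t = a*h + b := by
          unfold interpDeriv
          rw [Finset.sum_eq_single_of_mem 0 (Finset.mem_range.2 hnn)]
          · rw [if_pos ⟨ht0, hlt⟩]
            simp only [hu]
            rw [hx0, hx1]
            field_simp [hne]
            ring
          · intro j hj hj0
            rw [if_neg]
            rintro ⟨hjt, htj⟩
            have : x 1 ≤ x j := hmono 1 j (by omega) (le_of_lt (Finset.mem_range.1 hj))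
            linarith
        rw [hb, hd]
      · rw [Set.indicator_of_notMem (by simp [Set.mem_Ioo]; intro; exact not_lt.1 hlt)]
        have hb : biorthFn x n 0 t = 0 := by
          unfold biorthFn
          rw [if_neg (by simp), if_neg (by rintro ⟨_, _, hlt'⟩; exact hlt hlt')]
        rw [hb, mul_zero]
  -- denominator for i = 0
  have Iden0 : (∫ t in (x 0)..(x n), hatFn x n 0 t * biorthFn x n 0 t) = h/2 := by
    rw [integral_eq_of_ae_indicator hx0n le_rfl hx01 hx1n
      (g := fun t => ((x 1 - t)/(x 1 - x 0)) * ((2*(t - x 1) + (t - x 0))/(x 0 - x 1))) ?_]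
    · rw [hx0, hx1]
      have e1 : ∀ t : ℝ, ((h - t)/(h - 0)) * ((2*(t - h) + (t - 0))/(0 - h))
          = (3/h^2)*t^2 + (-5/h)*t + 2 := by
        intro t
        rw [div_mul_div_comm, div_eq_iff (show (h - 0)*(0 - h) ≠ 0 from
          mul_ne_zero (sub_ne_zero.mpr hne) (sub_ne_zero.mpr (Ne.symm hne)))]
        field_simp
        ring
      simp only [e1]
      rw [integral_quadratic]
      field_simp [hne]
      ring
    · filter_upwards [ae_ne_pt (x 1)] with t ht1 htm
      obtain ⟨ht0, htn⟩ := htm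
      by_cases hlt : t < x 1
      · rw [Set.indicator_of_mem (Set.mem_Ioo.2 ⟨ht0, hlt⟩)]
        have hb : biorthFn x n 0 t = (2*(t - x 1) + (t - x 0))/(x 0 - x 1) := by
          unfold biorthFn
          rw [if_neg (by simp), if_pos ⟨hnn, ht0.le, hlt⟩]
        have hh : hatFn x n 0 t = (x 1 - t)/(x 1 - x 0) := by
          unfold hatFn
          rw [if_neg (by simp), if_pos ⟨hnn, ht0.le, hlt.le⟩]
        rw [hb, hh]
      · rw [Set.indicator_of_notMem (by simp [Set.mem_Ioo]; intro; exact not_lt.1 hlt)]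
        have hb : biorthFn x n 0 t = 0 := by
          unfold biorthFn
          rw [if_neg (by simp), if_neg (by rintro ⟨_, _, hlt'⟩; exact hlt hlt')]
        rw [hb, mul_zero]
  -- numerator for i = n
  have hsucc : n - 1 + 1 = n := by omega
  have Inumn : (∫ t in (x 0)..(x n), interpDeriv x n u t * biorthFn x n n t)
      = (a*(2*(n:ℝ)-1)*h + b)*(h/2) := by
    rw [integral_eq_of_ae_indicator hx0n hx0m hxmn le_rfl
      (g := fun t => (a*(2*(n:ℝ)-1)*h + b) *
        ((2*(t - x (n-1)) + (t - x n))/(x n - x (n-1)))) ?_]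
    · rw [hxm, hxn]
      have e1 : ∀ t : ℝ, (a*(2*(n:ℝ)-1)*h + b) *
          ((2*(t - ((n:ℝ)-1)*h) + (t - (n:ℝ)*h))/((n:ℝ)*h - ((n:ℝ)-1)*h))
          = 0*t^2 + ((a*(2*(n:ℝ)-1)*h + b)*(3/h))*t
            + (a*(2*(n:ℝ)-1)*h + b)*((-(2*(((n:ℝ)-1)*h)) - (n:ℝ)*h)/h) := by
        intro t
        have hd2 : (n:ℝ)*h - ((n:ℝ)-1)*h = h := by ring
        rw [hd2, show (2*(t - ((n:ℝ)-1)*h) + (t - (n:ℝ)*h))/h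
          = (3/h)*t + (-(2*(((n:ℝ)-1)*h)) - (n:ℝ)*h)/h from by
            rw [div_eq_iff hne]; field_simp; ring]
        ring
      simp only [e1]
      rw [integral_quadratic]
      field_simp [hne]
      ring
    · filter_upwards [ae_ne_pt (x (n-1))] with t ht1 htm
      obtain ⟨ht0, htn⟩ := htm
      by_cases hgt : x (n-1) < t
      · by_cases hlt : t < x n
        · rw [Set.indicator_of_mem (Set.mem_Ioo.2 ⟨hgt, hlt⟩)]
          have hb : biorthFn x n n t
              = (2*(t - x (n-1)) + (t - x n))/(x n - x (n-1)) := by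
            unfold biorthFn
            rw [if_pos ⟨hnn, hgt.le, hlt⟩]
          have hd : interpDeriv x n u t = a*(2*(n:ℝ)-1)*h + b := by
            unfold interpDeriv
            rw [Finset.sum_eq_single_of_mem (n-1) (Finset.mem_range.2 (by omega))]
            · rw [hsucc, if_pos ⟨hgt, hlt⟩]
              simp only [hu]
              rw [hxm, hxn]
              have hd2 : (n:ℝ)*h - ((n:ℝ)-1)*h = h := by ring
              rw [hd2]
              field_simp [hne]
              ring
            · intro j hj hj0
              rw [if_neg]
              rintro ⟨hjt, htj⟩
              have hjn : j < n := Finset.mem_range.1 hj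
              have : x (j+1) ≤ x (n-1) := hmono (j+1) (n-1) (by omega) (by omega)
              linarith
          rw [hb, hd]
        · rw [Set.indicator_of_notMem (by simp [Set.mem_Ioo]; intro; exact not_lt.1 hlt)]
          have hb : biorthFn x n n t = 0 := by
            unfold biorthFn
            rw [if_neg (by rintro ⟨_, _, hlt'⟩; exact hlt hlt'),
              if_neg (by rintro ⟨hc, _⟩; exact absurd hc (lt_irrefl n))]
          rw [hb, mul_zero]
      · rw [Set.indicator_of_notMem (by simp [Set.mem_Ioo]; intro hc; exact absurd hc hgt)]
        have hb : biorthFn x n n t = 0 := by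
          unfold biorthFn
          rw [if_neg (by rintro ⟨_, hc, _⟩; exact hgt (lt_of_le_of_ne hc (Ne.symm ht1))),
            if_neg (by rintro ⟨hc, _⟩; exact absurd hc (lt_irrefl n))]
        rw [hb, mul_zero]
  -- denominator for i = n
  have Idenn : (∫ t in (x 0)..(x n), hatFn x n n t * biorthFn x n n t) = h/2 := by
    rw [integral_eq_of_ae_indicator hx0n hx0m hxmn le_rfl
      (g := fun t => ((t - x (n-1))/(x n - x (n-1))) *
        ((2*(t - x (n-1)) + (t - x n))/(x n - x (n-1)))) ?_]
    · rw [hxm, hxn]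
      have hd2 : (n:ℝ)*h - ((n:ℝ)-1)*h = h := by ring
      have e1 : ∀ t : ℝ, ((t - ((n:ℝ)-1)*h)/((n:ℝ)*h - ((n:ℝ)-1)*h)) *
          ((2*(t - ((n:ℝ)-1)*h) + (t - (n:ℝ)*h))/((n:ℝ)*h - ((n:ℝ)-1)*h))
          = (3/h^2)*t^2 + ((-(5*(((n:ℝ)-1)*h)) - (n:ℝ)*h)/h^2)*t
            + ((((n:ℝ)-1)*h)*(2*(((n:ℝ)-1)*h) + (n:ℝ)*h)/h^2) := by
        intro t
        rw [hd2, div_mul_div_comm, div_eq_iff (show h*h ≠ 0 from mul_ne_zero hne hne)]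
        field_simp
        ring
      simp only [e1]
      rw [integral_quadratic]
      field_simp [hne]
      ring
    · filter_upwards [ae_ne_pt (x (n-1))] with t ht1 htm
      obtain ⟨ht0, htn⟩ := htm
      by_cases hgt : x (n-1) < t
      · by_cases hlt : t < x n
        · rw [Set.indicator_of_mem (Set.mem_Ioo.2 ⟨hgt, hlt⟩)]
          have hb : biorthFn x n n t
              = (2*(t - x (n-1)) + (t - x n))/(x n - x (n-1)) := by
            unfold biorthFn
            rw [if_pos ⟨hnn, hgt.le, hlt⟩]
          have hh : hatFn x n n t = (t - x (n-1))/(x n - x (n-1)) := by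
            unfold hatFn
            rw [if_pos ⟨hnn, hgt.le, hlt.le⟩]
          rw [hb, hh]
        · rw [Set.indicator_of_notMem (by simp [Set.mem_Ioo]; intro; exact not_lt.1 hlt)]
          have hb : biorthFn x n n t = 0 := by
            unfold biorthFn
            rw [if_neg (by rintro ⟨_, _, hlt'⟩; exact hlt hlt'),
              if_neg (by rintro ⟨hc, _⟩; exact absurd hc (lt_irrefl n))]
          rw [hb, mul_zero]
      · rw [Set.indicator_of_notMem (by simp [Set.mem_Ioo]; intro hc; exact absurd hc hgt)]
        have hb : biorthFn x n n t = 0 := by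
          unfold biorthFn
          rw [if_neg (by rintro ⟨_, hc, _⟩; exact hgt (lt_of_le_of_ne hc (Ne.symm ht1))),
            if_neg (by rintro ⟨hc, _⟩; exact absurd hc (lt_irrefl n))]
        rw [hb, mul_zero]
  constructor
  · unfold recGrad
    rw [Inum0, Iden0, hx0]
    have hv : (a*h + b)*(h/2)/(h/2) = a*h + b := by field_simp [hne]
    rw [hv, show a*h + b - (2*a*0 + b) = a*h by ring, abs_mul, abs_of_pos hpos]
  · unfold recGrad
    rw [Inumn, Idenn, hxn]
    have hv : (a*(2*(n:ℝ)-1)*h + b)*(h/2)/(h/2) = a*(2*(n:ℝ)-1)*h + b := by field_simp [hne]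
    rw [hv, show a*(2*(n:ℝ)-1)*h + b - (2*a*((n:ℝ)*h) + b) = a*(-h) by ring, abs_mul]
    rw [abs_neg, abs_of_pos hpos]
end

section
/- (Corollary, nodal error for cubics) Let u(x) = a x³ + b x² + c x + d with a, b, c, d ∈ ℝ. Then for every interior index 1 ≤ i ≤ n−1, g_i − u'(x_i) = a (x_{i−1}² + x_{i−1} x_{i+1} + x_{i+1}² − 3 x_i²) + b (x_{i−1} + x_{i+1} − 2 x_i); moreover g_0 − u'(x_0) = a (x_1² + x_0 x_1 − 2 x_0²) + b (x_1 − x_0) and g_n − u'(x_n) = a (x_{n−1}² + x_{n−1} x_n − 2 x_n²) + b (x_{n−1} − x_n). -/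
open intervalIntegral

set_option maxHeartbeats 1000000
open MeasureTheory Set


lemma quadInt (e f g p q : ℝ) :
    ∫ t in p..q, (e*t^2 + f*t + g) = e*(q^3-p^3)/3 + f*(q^2-p^2)/2 + g*(q-p) := by
  have hF : ∀ t : ℝ, HasDerivAt (fun s => e*s^3/3 + f*s^2/2 + g*s) (e*t^2+f*t+g) t := by
    intro t
    have h1 : HasDerivAt (fun s:ℝ => s^3) (3*t^2) t := by simpa using hasDerivAt_pow 3 t
    have h2 : HasDerivAt (fun s:ℝ => s^2) (2*t) t := by simpa using hasDerivAt_pow 2 t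
    have := (((h1.const_mul e).div_const 3).add ((h2.const_mul f).div_const 2)).add
      ((hasDerivAt_id t).const_mul g)
    exact (this.congr_deriv (by ring)).congr_of_eventuallyEq (Filter.Eventually.of_forall fun s => rfl)
  rw [intervalIntegral.integral_eq_sub_of_hasDerivAt (fun t _ => hF t)
    ((by fun_prop : Continuous fun t:ℝ => e*t^2+f*t+g).intervalIntegrable p q)]
  ring

lemma pieceInt (F : ℝ → ℝ) (e f g p q : ℝ) (hpq : p ≤ q)
    (h : ∀ t ∈ Set.Ioo p q, F t = e*t^2 + f*t + g) :
    IntervalIntegrable F volume p q ∧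
      ∫ t in p..q, F t = e*(q^3-p^3)/3 + f*(q^2-p^2)/2 + g*(q-p) := by
  have hG : Continuous fun t:ℝ => e*t^2+f*t+g := by fun_prop
  have key : Set.EqOn F (fun t:ℝ => e*t^2+f*t+g) (Set.Ioo p q) := fun t ht => h t ht
  constructor
  · rw [intervalIntegrable_iff_integrableOn_Ioo_of_le hpq]
    have := hG.intervalIntegrable p q (μ := volume)
    rw [intervalIntegrable_iff_integrableOn_Ioo_of_le hpq] at this
    exact this.congr_fun key.symm measurableSet_Ioo
  · rw [intervalIntegral.integral_of_le hpq, MeasureTheory.integral_Ioc_eq_integral_Ioo,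
      MeasureTheory.setIntegral_congr_fun measurableSet_Ioo key,
      ← MeasureTheory.integral_Ioc_eq_integral_Ioo, ← intervalIntegral.integral_of_le hpq,
      quadInt]


lemma xmono {n : ℕ} {x : ℕ → ℝ} (hx : ∀ i < n, x i < x (i+1)) :
    ∀ {i j : ℕ}, i ≤ j → j ≤ n → x i ≤ x j := by
  intro i j hij hjn
  induction j with
  | zero => have : i = 0 := Nat.le_zero.mp hij; rw [this]
  | succ k ih =>
    rcases Nat.eq_or_lt_of_le hij with h | h
    · exact le_of_eq (congrArg x h)
    · exact le_trans (ih (by omega) (by omega)) (le_of_lt (hx k (by omega)))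

lemma interpDeriv_eval {n : ℕ} {x : ℕ → ℝ} (hx : ∀ i < n, x i < x (i+1)) (u : ℝ → ℝ)
    {j : ℕ} (hj : j < n) {t : ℝ} (ht : t ∈ Set.Ioo (x j) (x (j+1))) :
    interpDeriv x n u t = (u (x (j+1)) - u (x j)) / (x (j+1) - x j) := by
  unfold interpDeriv
  rw [Finset.sum_eq_single j]
  · rw [if_pos ⟨ht.1, ht.2⟩]
  · intro k hk hkj
    rw [if_neg]
    rintro ⟨hk1, hk2⟩
    rcases lt_or_gt_of_ne hkj with h | h
    · have : x (k+1) ≤ x j := xmono hx (by omega) (by omega)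
      have := ht.1; linarith
    · have : x (j+1) ≤ x k := xmono hx (by omega) (le_of_lt (Finset.mem_range.mp hk))
      have := ht.2; linarith
  · intro h; exact absurd (Finset.mem_range.mpr hj) h

lemma recGrad_interior (n : ℕ) (x : ℕ → ℝ) (hx : ∀ i < n, x i < x (i+1)) (u : ℝ → ℝ)
    (i : ℕ) (hi1 : 1 ≤ i) (hi2 : i < n) :
    recGrad x n u i = (u (x (i+1)) - u (x (i-1))) / (x (i+1) - x (i-1)) := by
  have hii : i - 1 + 1 = i := by omega
  have hAB : x (i-1) < x i := by have := hx (i-1) (by omega); rwa [hii] at this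
  have hBC : x i < x (i+1) := hx i hi2
  have h0A : x 0 ≤ x (i-1) := xmono hx (by omega) (by omega)
  have hCn : x (i+1) ≤ x n := xmono hx (by omega) (by omega)
  have hBA : x i - x (i-1) ≠ 0 := sub_ne_zero.mpr hAB.ne'
  have hCB : x (i+1) - x i ≠ 0 := sub_ne_zero.mpr hBC.ne'
  have hBC' : x i - x (i+1) ≠ 0 := sub_ne_zero.mpr hBC.ne
  -- numerator pieces
  have P1 := pieceInt (fun t => interpDeriv x n u t * biorthFn x n i t) 0 0 0 (x 0) (x (i-1))
    h0A (by
      intro t ht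
      have hb : biorthFn x n i t = 0 := by
        unfold biorthFn
        rw [if_neg, if_neg]
        · rintro ⟨-, h, -⟩; linarith [ht.2]
        · rintro ⟨-, h, -⟩; linarith [ht.2]
      simp [hb])
  have P2 := pieceInt (fun t => interpDeriv x n u t * biorthFn x n i t) 0
      (3*((u (x i) - u (x (i-1)))/(x i - x (i-1)))/(x i - x (i-1)))
      (-(2*(x (i-1))+(x i))*((u (x i) - u (x (i-1)))/(x i - x (i-1)))/(x i - x (i-1)))
      (x (i-1)) (x i) hAB.le (by
      intro t ht
      have hd : interpDeriv x n u t = (u (x i) - u (x (i-1))) / (x i - x (i-1)) := by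
        have := interpDeriv_eval hx u (j := i-1) (by omega) (by rw [hii]; exact ht)
        rwa [hii] at this
      have hb : biorthFn x n i t = (2*(t - x (i-1)) + (t - x i)) / (x i - x (i-1)) := by
        unfold biorthFn
        rw [if_pos ⟨by omega, ht.1.le, ht.2⟩]
      simp only [hd, hb]; field_simp; ring)
  have P3 := pieceInt (fun t => interpDeriv x n u t * biorthFn x n i t) 0
      (3*((u (x (i+1)) - u (x i))/(x (i+1) - x i))/(x i - x (i+1)))
      (-(2*(x (i+1))+(x i))*((u (x (i+1)) - u (x i))/(x (i+1) - x i))/(x i - x (i+1)))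
      (x i) (x (i+1)) hBC.le (by
      intro t ht
      have hd : interpDeriv x n u t = (u (x (i+1)) - u (x i)) / (x (i+1) - x i) :=
        interpDeriv_eval hx u hi2 ht
      have hb : biorthFn x n i t = (2*(t - x (i+1)) + (t - x i)) / (x i - x (i+1)) := by
        unfold biorthFn
        rw [if_neg, if_pos ⟨hi2, ht.1.le, ht.2⟩]
        rintro ⟨-, -, h⟩; linarith [ht.1]
      simp only [hd, hb]; field_simp; ring)
  have P4 := pieceInt (fun t => interpDeriv x n u t * biorthFn x n i t) 0 0 0 (x (i+1)) (x n)
    hCn (by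
      intro t ht
      have hb : biorthFn x n i t = 0 := by
        unfold biorthFn
        rw [if_neg, if_neg]
        · rintro ⟨-, -, h⟩; linarith [ht.1]
        · rintro ⟨-, -, h⟩; linarith [ht.1]
      simp [hb])
  -- denominator pieces
  have Q1 := pieceInt (fun t => hatFn x n i t * biorthFn x n i t) 0 0 0 (x 0) (x (i-1))
    h0A (by
      intro t ht
      have hb : biorthFn x n i t = 0 := by
        unfold biorthFn
        rw [if_neg, if_neg]
        · rintro ⟨-, h, -⟩; linarith [ht.2]
        · rintro ⟨-, h, -⟩; linarith [ht.2]
      simp [hb])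
  have Q2 := pieceInt (fun t => hatFn x n i t * biorthFn x n i t)
      (3/(x i - x (i-1))^2) (-(5*(x (i-1))+(x i))/(x i - x (i-1))^2)
      ((2*(x (i-1))^2+(x (i-1))*(x i))/(x i - x (i-1))^2)
      (x (i-1)) (x i) hAB.le (by
      intro t ht
      have hh : hatFn x n i t = (t - x (i-1)) / (x i - x (i-1)) := by
        unfold hatFn
        rw [if_pos ⟨by omega, ht.1.le, ht.2.le⟩]
      have hb : biorthFn x n i t = (2*(t - x (i-1)) + (t - x i)) / (x i - x (i-1)) := by
        unfold biorthFn
        rw [if_pos ⟨by omega, ht.1.le, ht.2⟩]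
      simp only [hh, hb]; field_simp; ring)
  have Q3 := pieceInt (fun t => hatFn x n i t * biorthFn x n i t)
      (-3/((x (i+1) - x i)*(x i - x (i+1)))) ((5*(x (i+1))+(x i))/((x (i+1) - x i)*(x i - x (i+1))))
      (-(2*(x (i+1))^2+(x i)*(x (i+1)))/((x (i+1) - x i)*(x i - x (i+1))))
      (x i) (x (i+1)) hBC.le (by
      intro t ht
      have hh : hatFn x n i t = (x (i+1) - t) / (x (i+1) - x i) := by
        unfold hatFn
        rw [if_neg, if_pos ⟨hi2, ht.1.le, ht.2.le⟩]
        rintro ⟨-, -, h⟩; linarith [ht.1]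
      have hb : biorthFn x n i t = (2*(t - x (i+1)) + (t - x i)) / (x i - x (i+1)) := by
        unfold biorthFn
        rw [if_neg, if_pos ⟨hi2, ht.1.le, ht.2⟩]
        rintro ⟨-, -, h⟩; linarith [ht.1]
      simp only [hh, hb]; field_simp; ring)
  have Q4 := pieceInt (fun t => hatFn x n i t * biorthFn x n i t) 0 0 0 (x (i+1)) (x n)
    hCn (by
      intro t ht
      have hb : biorthFn x n i t = 0 := by
        unfold biorthFn
        rw [if_neg, if_neg]
        · rintro ⟨-, -, h⟩; linarith [ht.1]
        · rintro ⟨-, -, h⟩; linarith [ht.1]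
      simp [hb])
  have eN1 := intervalIntegral.integral_add_adjacent_intervals P1.1 P2.1
  have eN2 := intervalIntegral.integral_add_adjacent_intervals (P1.1.trans P2.1) P3.1
  have eN3 := intervalIntegral.integral_add_adjacent_intervals ((P1.1.trans P2.1).trans P3.1) P4.1
  have eD1 := intervalIntegral.integral_add_adjacent_intervals Q1.1 Q2.1
  have eD2 := intervalIntegral.integral_add_adjacent_intervals (Q1.1.trans Q2.1) Q3.1
  have eD3 := intervalIntegral.integral_add_adjacent_intervals ((Q1.1.trans Q2.1).trans Q3.1) Q4.1
  have P2v : (∫ t in (x (i-1))..(x i), interpDeriv x n u t * biorthFn x n i t)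
      = (u (x i) - u (x (i-1))) / 2 := by
    rw [P2.2]; field_simp; ring
  have P3v : (∫ t in (x i)..(x (i+1)), interpDeriv x n u t * biorthFn x n i t)
      = (u (x (i+1)) - u (x i)) / 2 := by
    rw [P3.2]; field_simp; ring
  have Q2v : (∫ t in (x (i-1))..(x i), hatFn x n i t * biorthFn x n i t)
      = (x i - x (i-1)) / 2 := by
    rw [Q2.2]; field_simp; ring
  have Q3v : (∫ t in (x i)..(x (i+1)), hatFn x n i t * biorthFn x n i t)
      = (x (i+1) - x i) / 2 := by
    rw [Q3.2]; field_simp; ring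
  have hN : (∫ t in (x 0)..(x n), interpDeriv x n u t * biorthFn x n i t)
      = (u (x (i+1)) - u (x (i-1))) / 2 := by
    rw [← eN3, ← eN2, ← eN1, P1.2, P2v, P3v, P4.2]; ring
  have hD : (∫ t in (x 0)..(x n), hatFn x n i t * biorthFn x n i t)
      = (x (i+1) - x (i-1)) / 2 := by
    rw [← eD3, ← eD2, ← eD1, Q1.2, Q2v, Q3v, Q4.2]; ring
  unfold recGrad
  rw [hN, hD]
  have hCA : x (i+1) - x (i-1) ≠ 0 := by
    have : x (i-1) < x (i+1) := lt_trans hAB hBC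
    exact sub_ne_zero.mpr this.ne'
  field_simp

lemma recGrad_zero (n : ℕ) (x : ℕ → ℝ) (hn : 0 < n) (hx : ∀ i < n, x i < x (i+1)) (u : ℝ → ℝ) :
    recGrad x n u 0 = (u (x 1) - u (x 0)) / (x 1 - x 0) := by
  have h01 : x 0 < x 1 := hx 0 hn
  have h1n : x 1 ≤ x n := xmono hx (by omega) (by omega)
  have h10 : x 1 - x 0 ≠ 0 := sub_ne_zero.mpr h01.ne'
  have h01' : x 0 - x 1 ≠ 0 := sub_ne_zero.mpr h01.ne
  have P1 := pieceInt (fun t => interpDeriv x n u t * biorthFn x n 0 t) 0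
      (3*((u (x 1) - u (x 0))/(x 1 - x 0))/(x 0 - x 1))
      (-(2*(x 1)+(x 0))*((u (x 1) - u (x 0))/(x 1 - x 0))/(x 0 - x 1))
      (x 0) (x 1) h01.le (by
      intro t ht
      have hd : interpDeriv x n u t = (u (x 1) - u (x 0)) / (x 1 - x 0) :=
        interpDeriv_eval hx u hn ht
      have hb : biorthFn x n 0 t = (2*(t - x 1) + (t - x 0)) / (x 0 - x 1) := by
        unfold biorthFn
        rw [if_neg, if_pos ⟨hn, ht.1.le, ht.2⟩]
        rintro ⟨h, -⟩; exact absurd h (lt_irrefl 0)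
      simp only [hd, hb]; field_simp; ring)
  have P2 := pieceInt (fun t => interpDeriv x n u t * biorthFn x n 0 t) 0 0 0 (x 1) (x n)
    h1n (by
      intro t ht
      have hb : biorthFn x n 0 t = 0 := by
        unfold biorthFn
        rw [if_neg, if_neg]
        · rintro ⟨-, -, h⟩; linarith [ht.1]
        · rintro ⟨h, -⟩; exact absurd h (lt_irrefl 0)
      simp [hb])
  have Q1 := pieceInt (fun t => hatFn x n 0 t * biorthFn x n 0 t)
      (-3/((x 1 - x 0)*(x 0 - x 1))) ((5*(x 1)+(x 0))/((x 1 - x 0)*(x 0 - x 1)))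
      (-(2*(x 1)^2+(x 0)*(x 1))/((x 1 - x 0)*(x 0 - x 1)))
      (x 0) (x 1) h01.le (by
      intro t ht
      have hh : hatFn x n 0 t = (x 1 - t) / (x 1 - x 0) := by
        unfold hatFn
        rw [if_neg, if_pos ⟨hn, ht.1.le, ht.2.le⟩]
        rintro ⟨h, -⟩; exact absurd h (lt_irrefl 0)
      have hb : biorthFn x n 0 t = (2*(t - x 1) + (t - x 0)) / (x 0 - x 1) := by
        unfold biorthFn
        rw [if_neg, if_pos ⟨hn, ht.1.le, ht.2⟩]
        rintro ⟨h, -⟩; exact absurd h (lt_irrefl 0)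
      simp only [hh, hb]; field_simp; ring)
  have Q2 := pieceInt (fun t => hatFn x n 0 t * biorthFn x n 0 t) 0 0 0 (x 1) (x n)
    h1n (by
      intro t ht
      have hb : biorthFn x n 0 t = 0 := by
        unfold biorthFn
        rw [if_neg, if_neg]
        · rintro ⟨-, -, h⟩; linarith [ht.1]
        · rintro ⟨h, -⟩; exact absurd h (lt_irrefl 0)
      simp [hb])
  have eN := intervalIntegral.integral_add_adjacent_intervals P1.1 P2.1
  have eD := intervalIntegral.integral_add_adjacent_intervals Q1.1 Q2.1
  have P1v : (∫ t in (x 0)..(x 1), interpDeriv x n u t * biorthFn x n 0 t)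
      = (u (x 1) - u (x 0)) / 2 := by
    rw [P1.2]; field_simp; ring
  have Q1v : (∫ t in (x 0)..(x 1), hatFn x n 0 t * biorthFn x n 0 t)
      = (x 1 - x 0) / 2 := by
    rw [Q1.2]; field_simp; ring
  have hN : (∫ t in (x 0)..(x n), interpDeriv x n u t * biorthFn x n 0 t)
      = (u (x 1) - u (x 0)) / 2 := by
    rw [← eN, P1v, P2.2]; ring
  have hD : (∫ t in (x 0)..(x n), hatFn x n 0 t * biorthFn x n 0 t)
      = (x 1 - x 0) / 2 := by
    rw [← eD, Q1v, Q2.2]; ring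
  unfold recGrad
  rw [hN, hD]
  field_simp

lemma recGrad_last (n : ℕ) (x : ℕ → ℝ) (hn : 0 < n) (hx : ∀ i < n, x i < x (i+1)) (u : ℝ → ℝ) :
    recGrad x n u n = (u (x n) - u (x (n-1))) / (x n - x (n-1)) := by
  have hnn : n - 1 + 1 = n := by omega
  have hAB : x (n-1) < x n := by have := hx (n-1) (by omega); rwa [hnn] at this
  have h0A : x 0 ≤ x (n-1) := xmono hx (by omega) (by omega)
  have hBA : x n - x (n-1) ≠ 0 := sub_ne_zero.mpr hAB.ne'
  have P1 := pieceInt (fun t => interpDeriv x n u t * biorthFn x n n t) 0 0 0 (x 0) (x (n-1))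
    h0A (by
      intro t ht
      have hb : biorthFn x n n t = 0 := by
        unfold biorthFn
        rw [if_neg, if_neg]
        · rintro ⟨h, -⟩; exact absurd h (lt_irrefl n)
        · rintro ⟨-, h, -⟩; linarith [ht.2]
      simp [hb])
  have P2 := pieceInt (fun t => interpDeriv x n u t * biorthFn x n n t) 0
      (3*((u (x n) - u (x (n-1)))/(x n - x (n-1)))/(x n - x (n-1)))
      (-(2*(x (n-1))+(x n))*((u (x n) - u (x (n-1)))/(x n - x (n-1)))/(x n - x (n-1)))
      (x (n-1)) (x n) hAB.le (by
      intro t ht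
      have hd : interpDeriv x n u t = (u (x n) - u (x (n-1))) / (x n - x (n-1)) := by
        have := interpDeriv_eval hx u (j := n-1) (by omega) (by rw [hnn]; exact ht)
        rwa [hnn] at this
      have hb : biorthFn x n n t = (2*(t - x (n-1)) + (t - x n)) / (x n - x (n-1)) := by
        unfold biorthFn
        rw [if_pos ⟨hn, ht.1.le, ht.2⟩]
      simp only [hd, hb]; field_simp; ring)
  have Q1 := pieceInt (fun t => hatFn x n n t * biorthFn x n n t) 0 0 0 (x 0) (x (n-1))
    h0A (by
      intro t ht
      have hb : biorthFn x n n t = 0 := by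
        unfold biorthFn
        rw [if_neg, if_neg]
        · rintro ⟨h, -⟩; exact absurd h (lt_irrefl n)
        · rintro ⟨-, h, -⟩; linarith [ht.2]
      simp [hb])
  have Q2 := pieceInt (fun t => hatFn x n n t * biorthFn x n n t)
      (3/(x n - x (n-1))^2) (-(5*(x (n-1))+(x n))/(x n - x (n-1))^2)
      ((2*(x (n-1))^2+(x (n-1))*(x n))/(x n - x (n-1))^2)
      (x (n-1)) (x n) hAB.le (by
      intro t ht
      have hh : hatFn x n n t = (t - x (n-1)) / (x n - x (n-1)) := by
        unfold hatFn
        rw [if_pos ⟨hn, ht.1.le, ht.2.le⟩]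
      have hb : biorthFn x n n t = (2*(t - x (n-1)) + (t - x n)) / (x n - x (n-1)) := by
        unfold biorthFn
        rw [if_pos ⟨hn, ht.1.le, ht.2⟩]
      simp only [hh, hb]; field_simp; ring)
  have eN := intervalIntegral.integral_add_adjacent_intervals P1.1 P2.1
  have eD := intervalIntegral.integral_add_adjacent_intervals Q1.1 Q2.1
  have P2v : (∫ t in (x (n-1))..(x n), interpDeriv x n u t * biorthFn x n n t)
      = (u (x n) - u (x (n-1))) / 2 := by
    rw [P2.2]; field_simp; ring
  have Q2v : (∫ t in (x (n-1))..(x n), hatFn x n n t * biorthFn x n n t)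
      = (x n - x (n-1)) / 2 := by
    rw [Q2.2]; field_simp; ring
  have hN : (∫ t in (x 0)..(x n), interpDeriv x n u t * biorthFn x n n t)
      = (u (x n) - u (x (n-1))) / 2 := by
    rw [← eN, P1.2, P2v]; ring
  have hD : (∫ t in (x 0)..(x n), hatFn x n n t * biorthFn x n n t)
      = (x n - x (n-1)) / 2 := by
    rw [← eD, Q1.2, Q2v]; ring
  unfold recGrad
  rw [hN, hD]
  field_simp

/-- nodal error for cubics: for `u(x) = a x³ + b x² + c x + d`
(so `u'(t) = 3 a t² + 2 b t + c`), for every interior index `1 ≤ i ≤ n-1`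
`g_i - u'(x_i) = a (x_{i-1}² + x_{i-1} x_{i+1} + x_{i+1}² - 3 x_i²) + b (x_{i-1} + x_{i+1} - 2 x_i)`,
and `g_0 - u'(x_0) = a (x_1² + x_0 x_1 - 2 x_0²) + b (x_1 - x_0)`,
`g_n - u'(x_n) = a (x_{n-1}² + x_{n-1} x_n - 2 x_n²) + b (x_{n-1} - x_n)`. -/
theorem recGrad_cubic_nodal_error (n : ℕ) (x : ℕ → ℝ) (hn : 2 ≤ n)
    (hx : ∀ i < n, x i < x (i+1)) (a b c d : ℝ) :
    (∀ i : ℕ, 1 ≤ i → i < n →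
      recGrad x n (fun t => a * t^3 + b * t^2 + c * t + d) i
          - (3 * a * (x i)^2 + 2 * b * x i + c)
        = a * ((x (i-1))^2 + x (i-1) * x (i+1) + (x (i+1))^2 - 3 * (x i)^2)
          + b * (x (i-1) + x (i+1) - 2 * x i)) ∧
    recGrad x n (fun t => a * t^3 + b * t^2 + c * t + d) 0
        - (3 * a * (x 0)^2 + 2 * b * x 0 + c)
      = a * ((x 1)^2 + x 0 * x 1 - 2 * (x 0)^2) + b * (x 1 - x 0) ∧
    recGrad x n (fun t => a * t^3 + b * t^2 + c * t + d) n
        - (3 * a * (x n)^2 + 2 * b * x n + c)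
      = a * ((x (n-1))^2 + x (n-1) * x n - 2 * (x n)^2) + b * (x (n-1) - x n) := by
  refine ⟨?_, ?_, ?_⟩
  · intro i hi1 hi2
    rw [recGrad_interior n x hx _ i hi1 hi2]
    have hAB : x (i-1) < x i := by
      have := hx (i-1) (by omega)
      rwa [show i - 1 + 1 = i from by omega] at this
    have hBC : x i < x (i+1) := hx i hi2
    have hCA : x (i+1) - x (i-1) ≠ 0 := sub_ne_zero.mpr (lt_trans hAB hBC).ne'
    field_simp
    ring
  · rw [recGrad_zero n x (by omega) hx]
    have h01 : x 1 - x 0 ≠ 0 := sub_ne_zero.mpr (hx 0 (by omega)).ne'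
    field_simp
    ring
  · rw [recGrad_last n x (by omega) hx]
    have hAB : x (n-1) < x n := by
      have := hx (n-1) (by omega)
      rwa [show n - 1 + 1 = n from by omega] at this
    have h01 : x n - x (n-1) ≠ 0 := sub_ne_zero.mpr hAB.ne'
    field_simp
    ring
end
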